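/- A pairwise exchange mechanism is strategy-proof if and only if it is envy-free. -/

import Mathlib

open Finset

/-- A preference over `n` objects, encoded by its rank function:
`r a` is the (0-based) rank of object `a`; object `a` is strictly preferred to `b`
iff `r a < r b`.  The `k`-th ranked object (0-based) is `r.symm k`. -/
abbrev Pref (n : ℕ) := Fin n ≃ Fin n

/-- The total probability that allocation `p` assigns to the upper contour set of `a`
(the objects weakly preferred to `a`) under preference `r`. -/
def upperSum {n : ℕ} (r : Pref n) (p : Fin n → ℝ) (a : Fin n) : ℝ :=
  ∑ o ∈ Finset.univ.filter (fun o => r o ≤ r a), p o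

/-- First-order stochastic dominance of `p` over `q` with respect to preference `r`. -/
def StochDom {n : ℕ} (r : Pref n) (p q : Fin n → ℝ) : Prop :=
  ∀ a : Fin n, upperSum r q a ≤ upperSum r p a

/-- A random assignment: a doubly stochastic matrix. -/
def IsRandomAssignment {n : ℕ} (P : Matrix (Fin n) (Fin n) ℝ) : Prop :=
  (∀ i a, 0 ≤ P i a) ∧ (∀ i, ∑ a, P i a = 1) ∧ (∀ a, ∑ i, P i a = 1)

/-- A mechanism maps every preference profile to a random assignment. -/
def IsMechanism {n : ℕ} (φ : (Fin n → Pref n) → Matrix (Fin n) (Fin n) ℝ) : Prop :=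
  ∀ prof, IsRandomAssignment (φ prof)

/-- Strategy-proofness: no agent can ever benefit (in the stochastic dominance sense)
from misreporting her preference. -/
def StrategyProof {n : ℕ} (φ : (Fin n → Pref n) → Matrix (Fin n) (Fin n) ℝ) : Prop :=
  ∀ (prof : Fin n → Pref n) (i : Fin n) (r' : Pref n),
    StochDom (prof i) (φ prof i) (φ (Function.update prof i r') i)

/-- Envy-freeness: each agent's allocation stochastically dominates every other
agent's allocation with respect to her own preference. -/
def EnvyFree {n : ℕ} (φ : (Fin n → Pref n) → Matrix (Fin n) (Fin n) ℝ) : Prop :=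
  ∀ (prof : Fin n → Pref n) (i j : Fin n), StochDom (prof i) (φ prof i) (φ prof j)

/-- The pairwise exchange mechanism induced by a transfer function `f`. -/
noncomputable def phiF {n : ℕ} (f : Pref n → Pref n → Fin n → ℝ) (prof : Fin n → Pref n) :
    Matrix (Fin n) (Fin n) ℝ :=
  fun i a => 1 / (n : ℝ) + ∑ j ∈ Finset.univ.erase i, f (prof i) (prof j) a

/-- The transfer function takes values in `[-1/n, 1/n]`. -/
def TransferBounded {n : ℕ} (f : Pref n → Pref n → Fin n → ℝ) : Prop :=
  ∀ r r' a, -(1 / (n : ℝ)) ≤ f r r' a ∧ f r r' a ≤ 1 / (n : ℝ)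

namespace PESPEF

variable {n : ℕ}

/-- Sum of the transfer over a set of objects. -/
def S (f : Pref n → Pref n → Fin n → ℝ) (W : Finset (Fin n)) (s t : Pref n) : ℝ :=
  ∑ o ∈ W, f s t o

/-- `q` ranks the objects of `W` in the top `W.card` positions. -/
def Adapt (W : Finset (Fin n)) (q : Pref n) : Prop :=
  ∀ o, o ∈ W ↔ (q o : ℕ) < W.card

/-- The permutation (rank function) sorting objects by a key. -/
noncomputable def sortPerm (key : Fin n → ℕ) : Pref n := (Tuple.sort key)⁻¹

/-- A two-valued profile. -/
def prof2 (i0 : Fin n) (q u : Pref n) : Fin n → Pref n := fun k => if k = i0 then q else u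

/-- A three-valued profile. -/
def prof3 (i0 j0 : Fin n) (q q' u : Pref n) : Fin n → Pref n :=
  fun k => if k = i0 then q else if k = j0 then q' else u

section Lemmas

variable (f : Pref n → Pref n → Fin n → ℝ)

lemma sortPerm_lt (key : Fin n → ℕ) {o1 o2 : Fin n} (h : key o1 < key o2) :
    sortPerm key o1 < sortPerm key o2 := by
  by_contra hcon
  push_neg at hcon
  have hm := Tuple.monotone_sort key hcon
  simp only [Function.comp_apply, sortPerm] at hm h
  rw [show (Tuple.sort key) ((Tuple.sort key)⁻¹ o2) = o2 from Equiv.apply_symm_apply _ _,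
    show (Tuple.sort key) ((Tuple.sort key)⁻¹ o1) = o1 from Equiv.apply_symm_apply _ _] at hm
  omega

lemma card_filter_lt (q : Pref n) (v : Fin n) :
    (Finset.univ.filter (fun o => q o < v)).card = (v : ℕ) := by
  rw [← Fin.card_Iio v]
  apply Finset.card_bij (fun o _ => q o)
  · intro a ha; simp only [Finset.mem_filter] at ha; simpa using ha.2
  · intro a _ b _ hab; exact q.injective hab
  · intro b hb
    refine ⟨q.symm b, ?_, by simp⟩
    simp only [Finset.mem_filter, Finset.mem_univ, true_and, Equiv.apply_symm_apply]
    simpa using hb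

lemma card_filter_le (q : Pref n) (v : Fin n) :
    (Finset.univ.filter (fun o => q o ≤ v)).card = (v : ℕ) + 1 := by
  rw [← Fin.card_Iic v]
  apply Finset.card_bij (fun o _ => q o)
  · intro a ha; simp only [Finset.mem_filter] at ha; simpa using ha.2
  · intro a _ b _ hab; exact q.injective hab
  · intro b hb
    refine ⟨q.symm b, ?_, by simp⟩
    simp only [Finset.mem_filter, Finset.mem_univ, true_and, Equiv.apply_symm_apply]
    simpa using hb

/-- If everything in `W` is ranked above everything outside, then `q` is `W`-adapted. -/
lemma adapt_of_sep {W : Finset (Fin n)} {q : Pref n}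
    (h : ∀ o1 o2, o1 ∈ W → o2 ∉ W → q o1 < q o2) : Adapt W q := by
  intro o
  constructor
  · intro ho
    by_contra hc
    push_neg at hc
    have hsub : Finset.univ.filter (fun o' => q o' ≤ q o) ⊆ W := by
      intro o' ho'
      simp only [Finset.mem_filter] at ho'
      by_contra ho'W
      exact absurd (h o o' ho ho'W) (not_lt.mpr ho'.2)
    have := Finset.card_le_card hsub
    rw [card_filter_le] at this
    omega
  · intro ho
    by_contra hc
    have hsub : W ⊆ Finset.univ.filter (fun o' => q o' < q o) := by
      intro o' ho'
      simp only [Finset.mem_filter, Finset.mem_univ, true_and]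
      exact h o' o ho' hc
    have := Finset.card_le_card hsub
    rw [card_filter_lt] at this
    omega

lemma adapt_threshold (key : Fin n → ℕ) (j : ℕ) :
    Adapt (Finset.univ.filter (fun o => key o < j)) (sortPerm key) := by
  apply adapt_of_sep
  intro o1 o2 h1 h2
  simp only [Finset.mem_filter, Finset.mem_univ, true_and] at h1 h2
  exact sortPerm_lt key (by omega)

/-- The upper contour set of `x` under `s`. -/
def CC (s : Pref n) (x : Fin n) : Finset (Fin n) := Finset.univ.filter (fun o => s o ≤ s x)

lemma adapt_CC (s : Pref n) (x : Fin n) : Adapt (CC s x) s := by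
  apply adapt_of_sep
  intro o1 o2 h1 h2
  simp only [CC, Finset.mem_filter, Finset.mem_univ, true_and] at h1 h2
  push_neg at h2
  exact lt_of_le_of_lt h1 h2

lemma adapt_CCstrict (s : Pref n) (x : Fin n) :
    Adapt (Finset.univ.filter (fun o => s o < s x)) s := by
  apply adapt_of_sep
  intro o1 o2 h1 h2
  simp only [Finset.mem_filter, Finset.mem_univ, true_and] at h1 h2
  push_neg at h2
  exact lt_of_lt_of_le h1 h2

lemma CC_erase (s : Pref n) (x : Fin n) :
    (CC s x).erase x = Finset.univ.filter (fun o => s o < s x) := by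
  ext o
  simp only [CC, Finset.mem_erase, Finset.mem_filter, Finset.mem_univ, true_and]
  constructor
  · rintro ⟨hne, hle⟩
    exact lt_of_le_of_ne hle (fun hq => hne (s.injective hq))
  · intro hlt
    exact ⟨fun he => absurd hlt (by simp [he]), le_of_lt hlt⟩

/-- identify `CC q x` when `q` is adapted to a chain step. -/
lemma CC_eq_of_adapt {C : Finset (Fin n)} {q : Pref n} {x : Fin n}
    (hC : Adapt C q) (hCx : Adapt (C.erase x) q) (hx : x ∈ C) : CC q x = C := by
  have hcard : (C.erase x).card = C.card - 1 := Finset.card_erase_of_mem hx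
  have hpos : 0 < C.card := Finset.card_pos.mpr ⟨x, hx⟩
  have hqx : (q x : ℕ) = C.card - 1 := by
    have h1 : (q x : ℕ) < C.card := (hC x).mp hx
    have h2 : ¬ ((q x : ℕ) < (C.erase x).card) := fun h => by
      simpa using (hCx x).mpr h
    omega
  ext o
  simp only [CC, Finset.mem_filter, Finset.mem_univ, true_and]
  rw [hC o, Fin.le_def, hqx]
  omega

lemma S_split {W : Finset (Fin n)} {x : Fin n} (hx : x ∈ W) (s t : Pref n) :
    S f W s t = S f (W.erase x) s t + f s t x := by
  rw [S, S, Finset.sum_erase_add _ _ hx]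

end Lemmas

lemma sum_erase_const {i : Fin n} (g : Fin n → ℝ) {c : ℝ} (h : ∀ k, k ≠ i → g k = c) :
    ∑ k ∈ Finset.univ.erase i, g k = ((n - 1 : ℕ) : ℝ) * c := by
  rw [Finset.sum_congr rfl (fun k hk => h k (Finset.ne_of_mem_erase hk)), Finset.sum_const,
    Finset.card_erase_of_mem (Finset.mem_univ i), Finset.card_univ, Fintype.card_fin,
    nsmul_eq_mul]

lemma sum_erase_split2 {i j : Fin n} (hij : j ≠ i) (g : Fin n → ℝ) {c : ℝ}
    (h : ∀ k, k ≠ i → k ≠ j → g k = c) :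
    ∑ k ∈ Finset.univ.erase i, g k = g j + ((n - 2 : ℕ) : ℝ) * c := by
  have hj : j ∈ Finset.univ.erase i := Finset.mem_erase.mpr ⟨hij, Finset.mem_univ j⟩
  rw [← Finset.sum_erase_add (Finset.univ.erase i) g hj]
  have hrest : ∑ k ∈ (Finset.univ.erase i).erase j, g k = ((n - 2 : ℕ) : ℝ) * c := by
    rw [Finset.sum_congr rfl (fun k hk => h k (Finset.ne_of_mem_erase (Finset.mem_of_mem_erase hk))
        (Finset.ne_of_mem_erase hk)), Finset.sum_const,
      Finset.card_erase_of_mem hj, Finset.card_erase_of_mem (Finset.mem_univ i),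
      Finset.card_univ, Fintype.card_fin, nsmul_eq_mul]
    have hss : n - 1 - 1 = n - 2 := by omega
    rw [hss]
  rw [hrest]
  ring

lemma sum_row (f : Pref n → Pref n → Fin n → ℝ) (W : Finset (Fin n)) (r : Pref n)
    (ps : Fin n → Pref n) (E : Finset (Fin n)) :
    ∑ o ∈ W, (1 / (n : ℝ) + ∑ j ∈ E, f r (ps j) o)
      = (W.card : ℝ) / n + ∑ j ∈ E, S f W r (ps j) := by
  rw [Finset.sum_add_distrib, Finset.sum_const, nsmul_eq_mul, Finset.sum_comm, mul_one_div]
  rfl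

section Mech

variable {f : Pref n → Pref n → Fin n → ℝ} (hn : 3 ≤ n) (hmech : IsMechanism (phiF f))

include hn hmech

lemma f_diag (s : Pref n) (a : Fin n) : f s s a = 0 := by
  have h := (hmech (fun _ => s)).2.2 a
  simp only [phiF] at h
  have hc : ∀ i : Fin n, (1 / (n:ℝ) + ∑ j ∈ Finset.univ.erase i, f s s a)
      = 1 / n + ((n - 1 : ℕ) : ℝ) * f s s a := by
    intro i
    rw [sum_erase_const (fun _ => f s s a) (fun _ _ => rfl)]
  rw [Finset.sum_congr rfl (fun i _ => hc i), Finset.sum_const, Finset.card_univ,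
    Fintype.card_fin, nsmul_eq_mul] at h
  have hn0 : (n : ℝ) ≠ 0 := Nat.cast_ne_zero.mpr (by omega)
  have h1 : (n : ℝ) * (1 / n) = 1 := by field_simp
  have h2 : ((n : ℝ) * ((n - 1 : ℕ) : ℝ)) * f s s a = 0 := by
    rw [mul_add, h1] at h; rw [mul_assoc]; linarith
  have hma : (n : ℝ) * ((n - 1 : ℕ) : ℝ) ≠ 0 := by
    have h3 : (0:ℝ) < (n : ℝ) := by exact_mod_cast Nat.pos_of_ne_zero (by omega)
    have h4 : (0:ℝ) < ((n - 1 : ℕ) : ℝ) := by exact_mod_cast Nat.pos_of_ne_zero (by omega)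
    positivity
  exact (mul_eq_zero.mp h2).resolve_left hma

/-- Antisymmetry of the transfer function, from double stochasticity. -/
lemma f_antisymm : ∀ s t a, f s t a = - f t s a := by
  intro s t a
  set i0 : Fin n := ⟨0, by omega⟩ with hi0
  set p : Fin n → Pref n := prof2 i0 s t with hp
  have h := (hmech p).2.2 a
  simp only [phiF] at h
  have hsum1 : ∑ _i : Fin n, (1 / (n:ℝ)) = 1 := by
    rw [Finset.sum_const, Finset.card_univ, Fintype.card_fin, nsmul_eq_mul]
    field_simp
  rw [Finset.sum_add_distrib, hsum1] at h
  have hT : ∑ i, ∑ j ∈ Finset.univ.erase i, f (p i) (p j) a = 0 := by linarith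
  rw [← Finset.sum_erase_add Finset.univ _ (Finset.mem_univ i0)] at hT
  have hpi0 : p i0 = s := by simp [hp, prof2]
  have hA : ∑ j ∈ Finset.univ.erase i0, f (p i0) (p j) a = ((n - 1 : ℕ) : ℝ) * f s t a := by
    apply sum_erase_const
    intro k hk
    have hk' : p k = t := by simp [hp, prof2, hk]
    rw [hpi0, hk']
  have hB : ∑ i ∈ Finset.univ.erase i0, (∑ j ∈ Finset.univ.erase i, f (p i) (p j) a)
      = ((n - 1 : ℕ) : ℝ) * f t s a := by
    apply sum_erase_const
    intro k hk
    have hpk : p k = t := by simp [hp, prof2, hk]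
    have hinner : ∑ j ∈ Finset.univ.erase k, f (p k) (p j) a
        = f (p k) (p i0) a + ((n - 2 : ℕ) : ℝ) * f t t a := by
      apply sum_erase_split2 (fun h' => hk h'.symm)
      intro k' hk1 hk2
      have : p k' = t := by simp [hp, prof2, hk2]
      rw [hpk, this]
    rw [hinner, hpk, hpi0, f_diag hn hmech t a]
    ring
  rw [hA, hB] at hT
  have hma : (0:ℝ) < ((n - 1 : ℕ) : ℝ) := by exact_mod_cast Nat.pos_of_ne_zero (by omega)
  nlinarith [hT]

lemma f_rowsum (s t : Pref n) : ∑ a, f s t a = 0 := by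
  set i0 : Fin n := ⟨0, by omega⟩ with hi0
  set p : Fin n → Pref n := prof2 i0 s t with hp
  have h := (hmech p).2.1 i0
  simp only [phiF] at h
  have hsum1 : ∑ _a : Fin n, (1 / (n:ℝ)) = 1 := by
    rw [Finset.sum_const, Finset.card_univ, Fintype.card_fin, nsmul_eq_mul]
    field_simp
  rw [Finset.sum_add_distrib, hsum1] at h
  have hT : ∑ a, ∑ j ∈ Finset.univ.erase i0, f (p i0) (p j) a = 0 := by linarith
  have hpi0 : p i0 = s := by simp [hp, prof2]
  have heval : ∀ a : Fin n, ∑ j ∈ Finset.univ.erase i0, f (p i0) (p j) a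
      = ((n - 1 : ℕ) : ℝ) * f s t a := by
    intro a
    apply sum_erase_const
    intro k hk
    have hk' : p k = t := by simp [hp, prof2, hk]
    rw [hpi0, hk']
  rw [Finset.sum_congr rfl (fun a _ => heval a), ← Finset.mul_sum] at hT
  have hma : ((n - 1 : ℕ) : ℝ) ≠ 0 := Nat.cast_ne_zero.mpr (by omega)
  exact (mul_eq_zero.mp hT).resolve_left hma

lemma S_antisymm (W : Finset (Fin n)) (s t : Pref n) : S f W s t = - S f W t s := by
  rw [S, S, ← Finset.sum_neg_distrib]
  exact Finset.sum_congr rfl (fun o _ => f_antisymm hn hmech s t o)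

lemma S_diag (W : Finset (Fin n)) (s : Pref n) : S f W s s = 0 := by
  rw [S]
  exact Finset.sum_eq_zero (fun o _ => f_diag hn hmech s o)

lemma S_univ (s t : Pref n) : S f Finset.univ s t = 0 := f_rowsum hn hmech s t

/-- Envy-freeness instance on an adapted set. -/
lemma filter_eq_of_adapt {W : Finset (Fin n)} {r : Pref n} (hW : Adapt W r)
    (hne : W.Nonempty) :
    Finset.univ.filter
        (fun o => r o ≤ r (r.symm ⟨W.card - 1, by
          have h1 := Finset.card_le_univ W
          simp only [Finset.card_univ, Fintype.card_fin] at h1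
          have h2 := hne.card_pos
          omega⟩)) = W := by
  ext o
  simp only [Finset.mem_filter, Finset.mem_univ, true_and, Equiv.apply_symm_apply, Fin.le_def]
  rw [hW o]
  have h2 := hne.card_pos
  omega

lemma EF_W (hEF : EnvyFree (phiF f)) (p : Fin n → Pref n) (i j : Fin n)
    (W : Finset (Fin n)) (hW : Adapt W (p i)) :
    ∑ k ∈ Finset.univ.erase j, S f W (p j) (p k)
      ≤ ∑ k ∈ Finset.univ.erase i, S f W (p i) (p k) := by
  rcases W.eq_empty_or_nonempty with rfl | hne
  · simp [S]
  have hcard : W.card - 1 < n := by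
    have h1 := Finset.card_le_univ W
    simp only [Finset.card_univ, Fintype.card_fin] at h1
    have h2 := hne.card_pos
    omega
  have h := hEF p i j ((p i).symm ⟨W.card - 1, hcard⟩)
  rw [upperSum, upperSum, filter_eq_of_adapt hn hmech hW hne] at h
  have e1 : ∑ o ∈ W, phiF f p i o
      = (W.card : ℝ) / n + ∑ k ∈ Finset.univ.erase i, S f W (p i) (p k) :=
    sum_row f W (p i) p (Finset.univ.erase i)
  have e2 : ∑ o ∈ W, phiF f p j o
      = (W.card : ℝ) / n + ∑ k ∈ Finset.univ.erase j, S f W (p j) (p k) :=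
    sum_row f W (p j) p (Finset.univ.erase j)
  linarith

/-- Strategy-proofness instance on an adapted set. -/
lemma SP_W (hSP : StrategyProof (phiF f)) (p : Fin n → Pref n) (i : Fin n) (r' : Pref n)
    (W : Finset (Fin n)) (hW : Adapt W (p i)) :
    ∑ k ∈ Finset.univ.erase i, S f W r' (p k)
      ≤ ∑ k ∈ Finset.univ.erase i, S f W (p i) (p k) := by
  rcases W.eq_empty_or_nonempty with rfl | hne
  · simp [S]
  have hcard : W.card - 1 < n := by
    have h1 := Finset.card_le_univ W
    simp only [Finset.card_univ, Fintype.card_fin] at h1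
    have h2 := hne.card_pos
    omega
  have h := hSP p i r' ((p i).symm ⟨W.card - 1, hcard⟩)
  rw [upperSum, upperSum, filter_eq_of_adapt hn hmech hW hne] at h
  have e1 : ∑ o ∈ W, phiF f p i o
      = (W.card : ℝ) / n + ∑ k ∈ Finset.univ.erase i, S f W (p i) (p k) :=
    sum_row f W (p i) p (Finset.univ.erase i)
  have e2 : ∑ o ∈ W, phiF f (Function.update p i r') i o
      = (W.card : ℝ) / n + ∑ k ∈ Finset.univ.erase i, S f W r' (p k) := by
    have : ∀ o, phiF f (Function.update p i r') i o
        = 1 / (n:ℝ) + ∑ j ∈ Finset.univ.erase i, f r' (p j) o := by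
      intro o
      simp only [phiF, Function.update_self]
      congr 1
      refine Finset.sum_congr rfl (fun j hj => ?_)
      rw [Function.update_of_ne (Finset.ne_of_mem_erase hj)]
    rw [Finset.sum_congr rfl (fun o _ => this o)]
    exact sum_row f W r' p (Finset.univ.erase i)
  linarith

end Mech

/-- Canonical `W`-adapted preference. -/
noncomputable def qOf (W : Finset (Fin n)) : Pref n :=
  sortPerm (fun o => if o ∈ W then 0 else 1)

lemma adapt_qOf (W : Finset (Fin n)) : Adapt W (qOf W) := by
  have h := adapt_threshold (n := n) (fun o => if o ∈ W then 0 else 1) 1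
  have heq : Finset.univ.filter (fun o => (if o ∈ W then 0 else 1) < 1) = W := by
    ext o
    simp only [Finset.mem_filter, Finset.mem_univ, true_and]
    by_cases hW : o ∈ W <;> simp [hW]
  rwa [heq] at h

/-- The common value of `S f W q u` over all `W`-adapted `q`. -/
noncomputable def alpha (f : Pref n → Pref n → Fin n → ℝ) (W : Finset (Fin n)) (u : Pref n) :
    ℝ :=
  S f W (qOf W) u

section Alpha

variable {f : Pref n → Pref n → Fin n → ℝ} (hn : 3 ≤ n) (hmech : IsMechanism (phiF f))
  (hEF : EnvyFree (phiF f))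

include hn hmech hEF

lemma EF_basic {W : Finset (Fin n)} {q : Pref n} (hq : Adapt W q) (u : Pref n) :
    0 ≤ S f W q u := by
  set i0 : Fin n := ⟨0, by omega⟩ with hi0
  set j0 : Fin n := ⟨1, by omega⟩ with hj0
  have hij : j0 ≠ i0 := by simp [hi0, hj0, Fin.ext_iff]
  set p : Fin n → Pref n := prof2 i0 q u with hp
  have hpi0 : p i0 = q := by simp [hp, prof2]
  have h := EF_W hn hmech hEF p i0 j0 W (by rwa [hpi0])
  have hL : ∑ k ∈ Finset.univ.erase j0, S f W (p j0) (p k)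
      = S f W u q + ((n - 2 : ℕ) : ℝ) * S f W u u := by
    have hpj0 : p j0 = u := by simp [hp, prof2, hij]
    rw [show (S f W u q : ℝ) = (fun k => S f W (p j0) (p k)) i0 by simp only [hpj0, hpi0]]
    apply sum_erase_split2 (Ne.symm hij)
    intro k hk1 hk2
    have : p k = u := by simp [hp, prof2, hk2]
    rw [hpj0, this]
  have hR : ∑ k ∈ Finset.univ.erase i0, S f W (p i0) (p k)
      = ((n - 1 : ℕ) : ℝ) * S f W q u := by
    apply sum_erase_const
    intro k hk
    have : p k = u := by simp [hp, prof2, hk]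
    rw [hpi0, this]
  rw [hL, hR, S_diag hn hmech, S_antisymm hn hmech W u q] at h
  have hc : (2:ℝ) ≤ ((n - 1 : ℕ) : ℝ) := by
    have : (2:ℕ) ≤ n - 1 := by omega
    exact_mod_cast this
  nlinarith [h]

lemma S_adapted_eq {W : Finset (Fin n)} {q q' : Pref n} (hq : Adapt W q) (hq' : Adapt W q')
    (u : Pref n) : S f W q u = S f W q' u := by
  have h0 : S f W q q' = 0 := by
    have h1 := EF_basic hn hmech hEF hq q'
    have h2 := EF_basic hn hmech hEF hq' q
    rw [S_antisymm hn hmech W q' q] at h2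
    linarith
  have key : ∀ (a b : Pref n), Adapt W a → Adapt W b → S f W a b = 0 →
      S f W b u ≤ S f W a u := by
    intro a b ha hb hab
    set i0 : Fin n := ⟨0, by omega⟩ with hi0
    set j0 : Fin n := ⟨1, by omega⟩ with hj0
    have hij : j0 ≠ i0 := by simp [hi0, hj0, Fin.ext_iff]
    set p : Fin n → Pref n := prof3 i0 j0 a b u with hp
    have hpi0 : p i0 = a := by simp [hp, prof3]
    have hpj0 : p j0 = b := by simp [hp, prof3, hij]
    have h := EF_W hn hmech hEF p i0 j0 W (by rwa [hpi0])
    have hL : ∑ k ∈ Finset.univ.erase j0, S f W (p j0) (p k)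
        = S f W b a + ((n - 2 : ℕ) : ℝ) * S f W b u := by
      rw [show (S f W b a : ℝ) = (fun k => S f W (p j0) (p k)) i0 by simp only [hpj0, hpi0]]
      apply sum_erase_split2 (Ne.symm hij)
      intro k hk1 hk2
      have : p k = u := by simp [hp, prof3, hk1, hk2]
      rw [hpj0, this]
    have hR : ∑ k ∈ Finset.univ.erase i0, S f W (p i0) (p k)
        = S f W a b + ((n - 2 : ℕ) : ℝ) * S f W a u := by
      rw [show (S f W a b : ℝ) = (fun k => S f W (p i0) (p k)) j0 by simp only [hpj0, hpi0]]
      apply sum_erase_split2 hij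
      intro k hk1 hk2
      have : p k = u := by simp [hp, prof3, hk1, hk2]
      rw [hpi0, this]
    rw [hL, hR, hab, S_antisymm hn hmech W b a, hab] at h
    have hc : (1:ℝ) ≤ ((n - 2 : ℕ) : ℝ) := by
      have : (1:ℕ) ≤ n - 2 := by omega
      exact_mod_cast this
    nlinarith [h]
  have h1 := key q q' hq hq' h0
  have h2 := key q' q hq' hq (by rw [S_antisymm hn hmech W q' q, h0]; ring)
  linarith

lemma S_eq_alpha {W : Finset (Fin n)} {q : Pref n} (hq : Adapt W q) (u : Pref n) :
    S f W q u = alpha f W u :=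
  S_adapted_eq hn hmech hEF hq (adapt_qOf W) u

lemma alpha_nonneg (W : Finset (Fin n)) (u : Pref n) : 0 ≤ alpha f W u :=
  EF_basic hn hmech hEF (adapt_qOf W) u

lemma alpha_adapted_zero {W : Finset (Fin n)} {u : Pref n} (hu : Adapt W u) :
    alpha f W u = 0 := by
  rw [← S_eq_alpha hn hmech hEF hu u, S_diag hn hmech]

/-- The chain formula: the transfer value is determined by `alpha`. -/
lemma fval (s u : Pref n) (x : Fin n) :
    f s u x = alpha f (CC s x) u - alpha f ((CC s x).erase x) u := by
  have hx : x ∈ CC s x := by simp [CC]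
  have h1 : S f (CC s x) s u = S f ((CC s x).erase x) s u + f s u x := S_split f hx s u
  have h2 : S f (CC s x) s u = alpha f (CC s x) u := S_eq_alpha hn hmech hEF (adapt_CC s x) u
  have h3 : S f ((CC s x).erase x) s u = alpha f ((CC s x).erase x) u := by
    apply S_eq_alpha hn hmech hEF _ u
    rw [CC_erase]
    exact adapt_CCstrict s x
  linarith

lemma fval_chain {D : Finset (Fin n)} {x : Fin n} {q : Pref n} (hxD : x ∉ D)
    (hD : Adapt D q) (hDx : Adapt (insert x D) q) (u : Pref n) :
    f q u x = alpha f (insert x D) u - alpha f D u := by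
  have hCC : CC q x = insert x D := by
    apply CC_eq_of_adapt hDx _ (Finset.mem_insert_self x D)
    rwa [Finset.erase_insert hxD]
  rw [fval hn hmech hEF, hCC, Finset.erase_insert hxD]

omit hn hmech hEF in
lemma adapt_of_filter_eq {key : Fin n → ℕ} {j : ℕ} {W : Finset (Fin n)}
    (h : ∀ o, key o < j ↔ o ∈ W) : Adapt W (sortPerm key) := by
  have h2 := adapt_threshold key j
  have heq : Finset.univ.filter (fun o => key o < j) = W := by
    ext o
    simp only [Finset.mem_filter, Finset.mem_univ, true_and]
    exact h o
  rwa [heq] at h2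

end Alpha

/-- A preference listing `D` first, then `x`, then `y`, then the rest. -/
noncomputable def chainq (D : Finset (Fin n)) (x y : Fin n) : Pref n :=
  sortPerm (fun o => if o ∈ D then 0 else if o = x then 1 else if o = y then 2 else 3)

/-- The submodularity defect of `alpha`. -/
noncomputable def sig (f : Pref n → Pref n → Fin n → ℝ) (D : Finset (Fin n)) (x y : Fin n)
    (u : Pref n) : ℝ :=
  alpha f (insert x D) u + alpha f (insert y D) u
    - alpha f (insert x (insert y D)) u - alpha f D u

section Claim1

variable {f : Pref n → Pref n → Fin n → ℝ} (hn : 3 ≤ n) (hmech : IsMechanism (phiF f))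
  (hEF : EnvyFree (phiF f))
variable {D : Finset (Fin n)} {x y : Fin n} (hx : x ∉ D) (hy : y ∉ D) (hxy : x ≠ y)

lemma adapt_chainq_D (hx : x ∉ D) (hy : y ∉ D) (hxy : x ≠ y) : Adapt D (chainq D x y) := by
  apply adapt_of_filter_eq (j := 1)
  intro o
  by_cases h1 : o ∈ D <;> by_cases h2 : o = x <;> by_cases h3 : o = y <;> simp_all

lemma adapt_chainq_Dx (hx : x ∉ D) (hy : y ∉ D) (hxy : x ≠ y) :
    Adapt (insert x D) (chainq D x y) := by
  apply adapt_of_filter_eq (j := 2)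
  intro o
  by_cases h1 : o ∈ D <;> by_cases h2 : o = x <;> by_cases h3 : o = y <;>
    simp_all [Finset.mem_insert]

lemma adapt_chainq_Dxy (hx : x ∉ D) (hy : y ∉ D) (hxy : x ≠ y) :
    Adapt (insert x (insert y D)) (chainq D x y) := by
  apply adapt_of_filter_eq (j := 3)
  intro o
  by_cases h1 : o ∈ D <;> by_cases h2 : o = x <;> by_cases h3 : o = y <;>
    simp_all [Finset.mem_insert]

include hn hmech hEF hx hy hxy

lemma sig_xExpr (u : Pref n) :
    sig f D x y u
      = (alpha f (CC u x) (chainq D y x) - alpha f ((CC u x).erase x) (chainq D y x))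
        - (alpha f (CC u x) (chainq D x y) - alpha f ((CC u x).erase x) (chainq D x y)) := by
  set q1 := chainq D x y with hq1
  set q2 := chainq D y x with hq2
  have e1 : f q1 u x = alpha f (insert x D) u - alpha f D u :=
    fval_chain hn hmech hEF hx (adapt_chainq_D hx hy hxy) (adapt_chainq_Dx hx hy hxy) u
  have e2 : f q2 u x = alpha f (insert x (insert y D)) u - alpha f (insert y D) u := by
    have hx' : x ∉ insert y D := by simp [Finset.mem_insert, hxy, hx]
    have hA : Adapt (insert y D) q2 := adapt_chainq_Dx hy hx (Ne.symm hxy)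
    have hB : Adapt (insert y (insert x D)) q2 := adapt_chainq_Dxy hy hx (Ne.symm hxy)
    rw [Finset.insert_comm] at hB
    exact fval_chain hn hmech hEF hx' hA hB u
  have e3 : f q1 u x = - f u q1 x := f_antisymm hn hmech q1 u x
  have e4 : f q2 u x = - f u q2 x := f_antisymm hn hmech q2 u x
  have e5 : f u q1 x = alpha f (CC u x) q1 - alpha f ((CC u x).erase x) q1 :=
    fval hn hmech hEF u q1 x
  have e6 : f u q2 x = alpha f (CC u x) q2 - alpha f ((CC u x).erase x) q2 :=
    fval hn hmech hEF u q2 x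
  rw [sig]
  linarith

lemma sig_yExpr (u : Pref n) :
    sig f D x y u
      = (alpha f (CC u y) (chainq D x y) - alpha f ((CC u y).erase y) (chainq D x y))
        - (alpha f (CC u y) (chainq D y x) - alpha f ((CC u y).erase y) (chainq D y x)) := by
  have h := sig_xExpr hn hmech hEF hy hx (Ne.symm hxy) u
  have hsym : sig f D x y u = sig f D y x u := by
    rw [sig, sig, Finset.insert_comm]
    ring
  rw [hsym, h]

omit hn hmech hEF in
lemma CC_chainq_x : CC (chainq D x y) x = insert x D := by
  apply CC_eq_of_adapt (adapt_chainq_Dx hx hy hxy) _ (Finset.mem_insert_self x D)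
  rw [Finset.erase_insert hx]
  exact adapt_chainq_D hx hy hxy

lemma sig_lt {u : Pref n} (hlt : u x < u y) :
    sig f D x y u = alpha f (insert y D) (chainq D x y) := by
  set q1 := chainq D x y with hq1
  set C := CC u x with hCdef
  have hxC : x ∈ C := by simp [hCdef, CC]
  have hyC : y ∉ C := by
    simp only [hCdef, CC, Finset.mem_filter, Finset.mem_univ, true_and]
    exact not_le.mpr hlt
  have hyCD : y ∉ C ∪ D := by simp [hyC, hy]
  -- the bridging preference w : [C∖x, x, D∖C, y, rest]
  set kw : Fin n → ℕ := fun o =>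
    if o ∈ C.erase x then 0 else if o = x then 1 else if o ∈ D then 2
      else if o = y then 3 else 4 with hkw
  set w : Pref n := sortPerm kw with hw
  have hWmain : ∀ (j : ℕ) (W : Finset (Fin n)),
      (∀ o, o ∈ C → o ≠ x → (0 < j ↔ o ∈ W)) → (∀ h : x ∈ C, (1 < j ↔ x ∈ W)) →
      (∀ o, o ∈ D → o ∉ C → o ≠ x → (2 < j ↔ o ∈ W)) → ((3 < j ↔ y ∈ W)) →
      (∀ o, o ∉ C → o ∉ D → o ≠ x → o ≠ y → (4 < j ↔ o ∈ W)) → Adapt W w := by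
    intro j W ha hb hc hd he
    apply adapt_of_filter_eq (j := j)
    intro o
    by_cases h2 : o = x
    · rw [h2]
      have hno : ¬ (x ∈ C.erase x) := by simp
      simp only [hkw]
      rw [if_neg hno]
      simpa using hb hxC
    · by_cases h1 : o ∈ C
      · have hin : o ∈ C.erase x := Finset.mem_erase.mpr ⟨h2, h1⟩
        simp only [hkw]
        rw [if_pos hin]
        simpa using ha o h1 h2
      · have h1' : ¬ (o ∈ C.erase x) := by simp [h1]
        by_cases h3 : o ∈ D
        · simp only [hkw]
          rw [if_neg h1', if_neg h2, if_pos h3]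
          exact hc o h3 h1 h2
        · by_cases h4 : o = y
          · rw [h4]
            have h1y : ¬ (y ∈ C.erase x) := by simp [hyC]
            have h2y : ¬ (y = x) := Ne.symm hxy
            simp only [hkw]
            rw [if_neg h1y, if_neg h2y, if_neg hy]
            simpa using hd
          · simp only [hkw]
            rw [if_neg h1', if_neg h2, if_neg h3, if_neg h4]
            exact he o h1 h3 h2 h4
  have hW1 : Adapt (C.erase x) w := by
    apply hWmain 1
    · intro o h1 h2; simp [Finset.mem_erase, h1, h2]
    · intro h; simp
    · intro o h1 h2 h3; simp [Finset.mem_erase, h2]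
    · simp [Finset.mem_erase, hyC]
    · intro o h1 h2 h3 h4; simp [Finset.mem_erase, h1]
  have hW2 : Adapt C w := by
    apply hWmain 2
    · intro o h1 h2; simp [h1]
    · intro h; simp [h]
    · intro o h1 h2 h3; simp [h2]
    · simp [hyC]
    · intro o h1 h2 h3 h4; simp [h1]
  have hW3 : Adapt (C ∪ D) w := by
    apply hWmain 3
    · intro o h1 h2; simp [Finset.mem_union, h1]
    · intro h; simp [Finset.mem_union, h]
    · intro o h1 h2 h3; simp [Finset.mem_union, h1]
    · simp [Finset.mem_union, hyC, hy]
    · intro o h1 h2 h3 h4; simp [Finset.mem_union, h1, h2]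
  have hW4 : Adapt (insert y (C ∪ D)) w := by
    apply hWmain 4
    · intro o h1 h2; simp [Finset.mem_insert, Finset.mem_union, h1]
    · intro h; simp [Finset.mem_insert, Finset.mem_union, h]
    · intro o h1 h2 h3; simp [Finset.mem_insert, Finset.mem_union, h1]
    · simp [Finset.mem_insert]
    · intro o h1 h2 h3 h4; simp [Finset.mem_insert, Finset.mem_union, h1, h2, h4]
  have hCCwx : CC w x = C := CC_eq_of_adapt hW2 hW1 hxC
  have hCCwy : CC w y = insert y (C ∪ D) := by
    apply CC_eq_of_adapt hW4 _ (Finset.mem_insert_self y (C ∪ D))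
    rwa [Finset.erase_insert hyCD]
  -- the second bridging preference w' : [D, x, C∖D∖x, y, rest]
  set kw' : Fin n → ℕ := fun o =>
    if o ∈ D then 0 else if o = x then 1 else if o ∈ C then 2
      else if o = y then 3 else 4 with hkw'
  set w' : Pref n := sortPerm kw' with hw'
  have hVmain : ∀ (j : ℕ) (W : Finset (Fin n)),
      (∀ o, o ∈ D → (0 < j ↔ o ∈ W)) → ((1 < j ↔ x ∈ W)) →
      (∀ o, o ∈ C → o ∉ D → o ≠ x → (2 < j ↔ o ∈ W)) → ((3 < j ↔ y ∈ W)) →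
      (∀ o, o ∉ C → o ∉ D → o ≠ x → o ≠ y → (4 < j ↔ o ∈ W)) → Adapt W w' := by
    intro j W ha hb hc hd he
    apply adapt_of_filter_eq (j := j)
    intro o
    by_cases h1 : o ∈ D
    · simp only [hkw']
      rw [if_pos h1]
      exact ha o h1
    · by_cases h2 : o = x
      · rw [h2]
        simp only [hkw']
        rw [if_neg hx]
        simpa using hb
      · by_cases h3 : o ∈ C
        · simp only [hkw']
          rw [if_neg h1, if_neg h2, if_pos h3]
          exact hc o h3 h1 h2
        · by_cases h4 : o = y
          · rw [h4]
            have h2y : ¬ (y = x) := Ne.symm hxy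
            simp only [hkw']
            rw [if_neg hy, if_neg h2y, if_neg hyC]
            simpa using hd
          · simp only [hkw']
            rw [if_neg h1, if_neg h2, if_neg h3, if_neg h4]
            exact he o h3 h1 h2 h4
  have hV1 : Adapt D w' := by
    apply hVmain 1
    · intro o h1; simp [h1]
    · simp [hx]
    · intro o h1 h2 h3; simp [h2]
    · simp [hy]
    · intro o h1 h2 h3 h4; simp [h2]
  have hV2 : Adapt (insert x D) w' := by
    apply hVmain 2
    · intro o h1; simp [Finset.mem_insert, h1]
    · simp [Finset.mem_insert]
    · intro o h1 h2 h3; simp [Finset.mem_insert, h2, h3]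
    · simp [Finset.mem_insert, hy, Ne.symm hxy]
    · intro o h1 h2 h3 h4; simp [Finset.mem_insert, h2, h3]
  have hV3 : Adapt (C ∪ D) w' := by
    apply hVmain 3
    · intro o h1; simp [Finset.mem_union, h1]
    · simp [Finset.mem_union, hxC]
    · intro o h1 h2 h3; simp [Finset.mem_union, h1]
    · simp [Finset.mem_union, hyC, hy]
    · intro o h1 h2 h3 h4; simp [Finset.mem_union, h1, h2]
  have hV4 : Adapt (insert y (C ∪ D)) w' := by
    apply hVmain 4
    · intro o h1; simp [Finset.mem_insert, Finset.mem_union, h1]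
    · simp [Finset.mem_insert, Finset.mem_union, hxC]
    · intro o h1 h2 h3; simp [Finset.mem_insert, Finset.mem_union, h1]
    · simp [Finset.mem_insert]
    · intro o h1 h2 h3 h4; simp [Finset.mem_insert, Finset.mem_union, h1, h2, h4]
  have hCCw'x : CC w' x = insert x D := by
    apply CC_eq_of_adapt hV2 _ (Finset.mem_insert_self x D)
    rwa [Finset.erase_insert hx]
  have hCCw'y : CC w' y = insert y (C ∪ D) := by
    apply CC_eq_of_adapt hV4 _ (Finset.mem_insert_self y (C ∪ D))
    rwa [Finset.erase_insert hyCD]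
  -- chain of equalities
  have h1 : sig f D x y u = sig f D x y w := by
    rw [sig_xExpr hn hmech hEF hx hy hxy u, sig_xExpr hn hmech hEF hx hy hxy w, hCCwx,
      ← hCdef]
  have h2 : sig f D x y w = sig f D x y w' := by
    rw [sig_yExpr hn hmech hEF hx hy hxy w, sig_yExpr hn hmech hEF hx hy hxy w', hCCwy,
      hCCw'y]
  have h3 : sig f D x y w' = sig f D x y q1 := by
    rw [sig_xExpr hn hmech hEF hx hy hxy w', sig_xExpr hn hmech hEF hx hy hxy q1, hCCw'x,
      CC_chainq_x hx hy hxy]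
  rw [h1, h2, h3, sig,
    alpha_adapted_zero hn hmech hEF (adapt_chainq_Dx hx hy hxy),
    alpha_adapted_zero hn hmech hEF (adapt_chainq_Dxy hx hy hxy),
    alpha_adapted_zero hn hmech hEF (adapt_chainq_D hx hy hxy)]
  ring

lemma sig_bridge :
    alpha f (insert x D) (chainq D y x) = alpha f (insert y D) (chainq D x y) := by
  set q1 := chainq D x y with hq1
  set q2 := chainq D y x with hq2
  have h1 : alpha f (insert x D) q2 = S f (insert x D) q1 q2 :=
    (S_eq_alpha hn hmech hEF (adapt_chainq_Dx hx hy hxy) q2).symm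
  have h2 : S f (insert x D) q1 q2 = - S f (insert x D) q2 q1 :=
    S_antisymm hn hmech _ q1 q2
  have h3 : S f (insert x D) q2 q1 = S f D q2 q1 + f q2 q1 x := by
    have := S_split f (Finset.mem_insert_self x D) q2 q1
    rwa [Finset.erase_insert hx] at this
  have h4 : S f D q2 q1 = 0 := by
    rw [S_eq_alpha hn hmech hEF (adapt_chainq_D hy hx (Ne.symm hxy)) q1,
      alpha_adapted_zero hn hmech hEF (adapt_chainq_D hx hy hxy)]
  have h5 : f q2 q1 x = alpha f (insert x (insert y D)) q1 - alpha f (insert y D) q1 := by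
    have hx' : x ∉ insert y D := by simp [Finset.mem_insert, hxy, hx]
    have hA : Adapt (insert y D) q2 := adapt_chainq_Dx hy hx (Ne.symm hxy)
    have hB : Adapt (insert y (insert x D)) q2 := adapt_chainq_Dxy hy hx (Ne.symm hxy)
    rw [Finset.insert_comm] at hB
    exact fval_chain hn hmech hEF hx' hA hB q1
  have h6 : alpha f (insert x (insert y D)) q1 = 0 :=
    alpha_adapted_zero hn hmech hEF (adapt_chainq_Dxy hx hy hxy)
  rw [h1, h2, h3, h4, h5, h6]
  ring

lemma sig_const (u : Pref n) :
    sig f D x y u = alpha f (insert y D) (chainq D x y) := by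
  rcases lt_trichotomy (u x) (u y) with h | h | h
  · exact sig_lt hn hmech hEF hx hy hxy h
  · exact absurd (u.injective h) hxy
  · have hsym : sig f D x y u = sig f D y x u := by
      rw [sig, sig, Finset.insert_comm]
      ring
    rw [hsym, sig_lt hn hmech hEF hy hx (Ne.symm hxy) h,
      sig_bridge hn hmech hEF hx hy hxy]

lemma sig_nonneg (u : Pref n) : 0 ≤ sig f D x y u := by
  rw [sig_const hn hmech hEF hx hy hxy u]
  exact alpha_nonneg hn hmech hEF _ _

end Claim1

section Main

variable {f : Pref n → Pref n → Fin n → ℝ} (hn : 3 ≤ n) (hmech : IsMechanism (phiF f))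
  (hEF : EnvyFree (phiF f))

include hn hmech hEF

/-- The pointwise strategy-proofness property, derived from envy-freeness. -/
lemma S_le_alpha (V : Finset (Fin n)) (s u : Pref n) : S f V s u ≤ alpha f V u := by
  suffices H : ∀ (N : ℕ) (V : Finset (Fin n)) (s : Pref n), (∑ o ∈ V, (s o : ℕ)) = N →
      ∀ u, S f V s u ≤ alpha f V u from H _ V s rfl u
  intro N
  induction N using Nat.strong_induction_on with
  | _ N ih =>
  intro V s hN u
  by_cases had : Adapt V s
  · rw [S_eq_alpha hn hmech hEF had u]
  · have hex : ∃ p : ℕ, ∃ hp : p + 1 < n,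
        s.symm ⟨p, Nat.lt_of_succ_lt hp⟩ ∉ V ∧ s.symm ⟨p + 1, hp⟩ ∈ V := by
      by_contra hcon
      push_neg at hcon
      apply had
      have hdc : ∀ b : ℕ, ∀ hb : b < n, s.symm ⟨b, hb⟩ ∈ V →
          ∀ a : ℕ, ∀ hab : a ≤ b, s.symm ⟨a, by omega⟩ ∈ V := by
        intro b
        induction b with
        | zero =>
          intro hb hmem a hab
          have ha0 : a = 0 := by omega
          subst ha0
          exact hmem
        | succ b ihb =>
          intro hb hmem a hab
          rcases Nat.eq_or_lt_of_le hab with heq | hlt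
          · subst heq
            exact hmem
          · have hb' : b < n := by omega
            have hbV : s.symm ⟨b, hb'⟩ ∈ V := by
              by_contra hnb
              exact (hcon b hb hnb) hmem
            exact ihb hb' hbV a (by omega)
      apply adapt_of_sep
      intro o1 o2 h1 h2
      by_contra hlt
      push_neg at hlt
      have hne : o1 ≠ o2 := fun h => h2 (h ▸ h1)
      have hlt' : (s o2 : ℕ) < (s o1 : ℕ) := by
        rcases lt_or_eq_of_le hlt with h | h
        · exact h
        · exact absurd (s.injective h).symm hne
      have h1' : s.symm ⟨(s o1 : ℕ), (s o1).isLt⟩ ∈ V := by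
        simpa using h1
      have := hdc (s o1 : ℕ) (s o1).isLt h1' (s o2 : ℕ) (le_of_lt hlt')
      simp at this
      exact h2 this
    obtain ⟨p, hp, hyV, hxV⟩ := hex
    set pp : Fin n := ⟨p, Nat.lt_of_succ_lt hp⟩ with hpp
    set pq : Fin n := ⟨p + 1, hp⟩ with hpq
    set y' := s.symm pp with hy'def
    set x' := s.symm pq with hx'def
    set s' : Pref n := s.trans (Equiv.swap pp pq) with hs'
    have hppq : pp ≠ pq := by simp [hpp, hpq, Fin.ext_iff]
    have hxy' : x' ≠ y' := fun h => hppq (s.symm.injective (by rw [hy'def, hx'def] at h; exact h)).symm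
    have hsx' : s x' = pq := by simp [hx'def]
    have hsy' : s y' = pp := by simp [hy'def]
    have hs'x' : s' x' = pp := by simp [hs', hsx', Equiv.swap_apply_right]
    have hs'y' : s' y' = pq := by simp [hs', hsy', Equiv.swap_apply_left]
    have hvalp : ∀ o : Fin n, (s o : ℕ) = p → o = y' := by
      intro o h
      have hso : s o = pp := Fin.val_injective (by simpa [hpp] using h)
      rw [hy'def, ← hso, Equiv.symm_apply_apply]
    have hvalq : ∀ o : Fin n, (s o : ℕ) = p + 1 → o = x' := by
      intro o h
      have hso : s o = pq := Fin.val_injective (by simpa [hpq] using h)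
      rw [hx'def, ← hso, Equiv.symm_apply_apply]
    have hother : ∀ o, o ≠ x' → o ≠ y' → s' o = s o := by
      intro o h1 h2
      have hno1 : s o ≠ pp := fun h => h2 (by rw [hy'def, ← h, Equiv.symm_apply_apply])
      have hno2 : s o ≠ pq := fun h => h1 (by rw [hx'def, ← h, Equiv.symm_apply_apply])
      simp [hs', Equiv.swap_apply_of_ne_of_ne hno1 hno2]
    -- values agree off x', y'
    have hCCeq : ∀ o, o ≠ x' → o ≠ y' → CC s o = CC s' o := by
      intro o ho1 ho2
      have hso : s' o = s o := hother o ho1 ho2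
      have hso1 : (s o : ℕ) ≠ p := fun h => ho2 (hvalp o h)
      have hso2 : (s o : ℕ) ≠ p + 1 := fun h => ho1 (hvalq o h)
      ext o'
      simp only [CC, Finset.mem_filter, Finset.mem_univ, true_and, hso, Fin.le_def]
      by_cases h1 : o' = x'
      · rw [h1, hsx']
        have : (s' x' : ℕ) = p := by rw [hs'x']
        rw [show s' x' = pp from hs'x']
        simp only [hpq, hpp]
        omega
      · by_cases h2 : o' = y'
        · rw [h2, hsy']
          rw [show s' y' = pq from hs'y']
          simp only [hpq, hpp]
          omega
        · rw [hother o' h1 h2]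
    have hfeq : ∀ o, o ≠ x' → o ≠ y' → f s u o = f s' u o := by
      intro o h1 h2
      rw [fval hn hmech hEF s u o, fval hn hmech hEF s' u o, hCCeq o h1 h2]
    -- the swap decreases the measure by one
    have hy'V : y' ∉ V := hyV
    have hx'V : x' ∈ V := hxV
    have hsum_rest : ∑ o ∈ V.erase x', (s' o : ℕ) = ∑ o ∈ V.erase x', (s o : ℕ) := by
      apply Finset.sum_congr rfl
      intro o ho
      have h1 : o ≠ x' := Finset.ne_of_mem_erase ho
      have h2 : o ≠ y' := fun h => hy'V (h ▸ Finset.mem_of_mem_erase ho)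
      rw [hother o h1 h2]
    have hNs : ∑ o ∈ V.erase x', (s o : ℕ) + (p + 1) = N := by
      rw [← hN, ← Finset.sum_erase_add V _ hx'V, hsx', hpq]
    have hNs' : ∑ o ∈ V, (s' o : ℕ) = N - 1 := by
      have hvx : ((s' x' : Fin n) : ℕ) = p := by rw [hs'x']
      rw [← Finset.sum_erase_add V _ hx'V, hsum_rest, hvx]
      omega
    have hNpos : 0 < N := by omega
    -- split off x'
    have hsplit : S f V s u = S f (V.erase x') s u + f s u x' := S_split f hx'V s u
    have hsplit' : S f V s' u = S f (V.erase x') s' u + f s' u x' := S_split f hx'V s' u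
    have hrest : S f (V.erase x') s u = S f (V.erase x') s' u := by
      apply Finset.sum_congr rfl
      intro o ho
      exact hfeq o (Finset.ne_of_mem_erase ho)
        (fun h => hy'V (h ▸ Finset.mem_of_mem_erase ho))
    -- the swap step via submodularity
    have hstep : f s u x' ≤ f s' u x' := by
      set hC := CC s x' with hCdef
      have hx'C : x' ∈ hC := by simp [hCdef, CC]
      have hy'C : y' ∈ hC := by
        simp only [hCdef, CC, Finset.mem_filter, Finset.mem_univ, true_and, hsy', hsx',
          Fin.le_def]
        simp [hpp, hpq]
      have hCC' : CC s' x' = hC.erase y' := by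
        ext o
        simp only [CC, Finset.mem_filter, Finset.mem_univ, true_and, Finset.mem_erase,
          hCdef, hs'x']
        by_cases h1 : o = x'
        · rw [h1, hs'x']
          simp [hxy', hsx', Fin.le_def]
        · by_cases h2 : o = y'
          · rw [h2, hs'y']
            simp only [Fin.le_def, hpp, hpq]
            simp
          · rw [hother o h1 h2]
            have hso1 : (s o : ℕ) ≠ p := fun h => h2 (hvalp o h)
            have hso2 : (s o : ℕ) ≠ p + 1 := fun h => h1 (hvalq o h)
            simp only [Fin.le_def, hpp, hpq, hsx']
            constructor
            · intro h; exact ⟨h2, by omega⟩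
            · rintro ⟨-, h⟩; omega
      set Dn := (hC.erase x').erase y' with hDn
      have hx'Dn : x' ∉ Dn := by simp [hDn]
      have hy'Dn : y' ∉ Dn := by simp [hDn]
      have hiy : insert y' Dn = hC.erase x' := by
        rw [hDn]
        exact Finset.insert_erase (Finset.mem_erase.mpr ⟨Ne.symm hxy', hy'C⟩)
      have hix : insert x' (insert y' Dn) = hC := by
        rw [hiy]
        exact Finset.insert_erase hx'C
      have hixd : insert x' Dn = hC.erase y' := by
        rw [hDn, Finset.erase_right_comm]
        exact Finset.insert_erase (Finset.mem_erase.mpr ⟨hxy', hx'C⟩)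
      have hsig := sig_nonneg hn hmech hEF hx'Dn hy'Dn hxy' u
      rw [sig, hix, hiy, hixd] at hsig
      have e1 : f s u x' = alpha f hC u - alpha f (hC.erase x') u := by
        rw [fval hn hmech hEF s u x', hCdef]
      have e2 : f s' u x' = alpha f (hC.erase y') u - alpha f ((hC.erase y').erase x') u := by
        rw [fval hn hmech hEF s' u x', hCC']
      rw [e1, e2, show (hC.erase y').erase x' = Dn by rw [hDn, Finset.erase_right_comm]]
      linarith
    have hIH := ih (N - 1) (by omega) V s' hNs' u
    linarith [hsplit, hsplit', hrest, hstep, hIH]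

end Main

end PESPEF

open PESPEF

/-- Within the class of pairwise exchange mechanisms, strategy-proofness is
equivalent to envy-freeness. -/
theorem pairwise_exchange_sp_iff_ef (n : ℕ) (hn : 3 ≤ n)
    (f : Pref n → Pref n → Fin n → ℝ) (hf : TransferBounded f)
    (hmech : IsMechanism (phiF f)) :
    StrategyProof (phiF f) ↔ EnvyFree (phiF f) := by
  constructor
  · -- strategy-proofness implies envy-freeness
    intro hSP prof i j a
    by_cases hij : i = j
    · subst hij; exact le_refl _
    · set r := prof i with hr
      set V := CC r a with hV
      have hAd : Adapt V r := adapt_CC r a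
      have hfil : Finset.univ.filter (fun o => r o ≤ r a) = V := rfl
      -- pointwise strategy-proofness
      have hpt : ∀ s u : Pref n, S f V s u ≤ S f V r u := by
        intro s u
        set i0 : Fin n := ⟨0, by omega⟩ with hi0
        set p : Fin n → Pref n := prof2 i0 r u with hp
        have hpi0 : p i0 = r := by simp [hp, prof2]
        have h := SP_W hn hmech hSP p i0 s V (by rwa [hpi0])
        have hL : ∑ k ∈ Finset.univ.erase i0, S f V s (p k)
            = ((n - 1 : ℕ) : ℝ) * S f V s u := by
          apply sum_erase_const
          intro k hk
          rw [show p k = u by simp [hp, prof2, hk]]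
        have hR : ∑ k ∈ Finset.univ.erase i0, S f V (p i0) (p k)
            = ((n - 1 : ℕ) : ℝ) * S f V r u := by
          apply sum_erase_const
          intro k hk
          rw [hpi0, show p k = u by simp [hp, prof2, hk]]
        rw [hL, hR] at h
        have hc : (0:ℝ) < ((n - 1 : ℕ) : ℝ) := by
          exact_mod_cast Nat.pos_of_ne_zero (by omega)
        exact le_of_mul_le_mul_left h hc
      have e1 : upperSum r (phiF f prof i) a
          = (V.card : ℝ) / n + ∑ k ∈ Finset.univ.erase i, S f V r (prof k) := by
        rw [upperSum, hfil]
        simp only [phiF]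
        rw [← hr]
        exact sum_row f V r prof _
      have e2 : upperSum r (phiF f prof j) a
          = (V.card : ℝ) / n + ∑ k ∈ Finset.univ.erase j, S f V (prof j) (prof k) := by
        rw [upperSum, hfil]
        simp only [phiF]
        exact sum_row f V (prof j) prof _
      rw [e1, e2]
      have hiej : i ∈ Finset.univ.erase j := Finset.mem_erase.mpr ⟨hij, Finset.mem_univ i⟩
      have hjei : j ∈ Finset.univ.erase i :=
        Finset.mem_erase.mpr ⟨fun h => hij h.symm, Finset.mem_univ j⟩
      have hsum : ∑ k ∈ Finset.univ.erase j, S f V (prof j) (prof k)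
          ≤ ∑ k ∈ Finset.univ.erase i, S f V r (prof k) := by
        rw [← Finset.sum_erase_add _ _ hiej, ← Finset.sum_erase_add _ _ hjei,
          Finset.erase_right_comm]
        have hterm : ∀ k ∈ (Finset.univ.erase i).erase j,
            S f V (prof j) (prof k) ≤ S f V r (prof k) := fun k _ => hpt (prof j) (prof k)
        have hhead : S f V (prof j) (prof i) ≤ S f V r (prof j) := by
          have h1 : 0 ≤ S f V r (prof j) := by
            have h2 := hpt (prof j) (prof j)
            rwa [S_diag hn hmech] at h2
          have h2 : S f V (prof j) (prof i) = - S f V r (prof j) := by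
            rw [← hr]
            exact S_antisymm hn hmech V (prof j) r
          linarith
        exact add_le_add (Finset.sum_le_sum hterm) hhead
      linarith
  · -- envy-freeness implies strategy-proofness
    intro hEF prof i r' a
    set r := prof i with hr
    set V := CC r a with hV
    have hAd : Adapt V r := adapt_CC r a
    have hfil : Finset.univ.filter (fun o => r o ≤ r a) = V := rfl
    have e1 : upperSum r (phiF f prof i) a
        = (V.card : ℝ) / n + ∑ k ∈ Finset.univ.erase i, S f V r (prof k) := by
      rw [upperSum, hfil]
      simp only [phiF]
      rw [← hr]
      exact sum_row f V r prof _
    have e2 : upperSum r (phiF f (Function.update prof i r') i) a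
        = (V.card : ℝ) / n + ∑ k ∈ Finset.univ.erase i, S f V r' (prof k) := by
      rw [upperSum, hfil]
      have hrow : ∀ o, phiF f (Function.update prof i r') i o
          = 1 / (n:ℝ) + ∑ j ∈ Finset.univ.erase i, f r' (prof j) o := by
        intro o
        simp only [phiF, Function.update_self]
        congr 1
        refine Finset.sum_congr rfl (fun j hj => ?_)
        rw [Function.update_of_ne (Finset.ne_of_mem_erase hj)]
      rw [Finset.sum_congr rfl (fun o _ => hrow o)]
      exact sum_row f V r' prof _
    rw [e1, e2]
    have hterm : ∀ k ∈ Finset.univ.erase i, S f V r' (prof k) ≤ S f V r (prof k) := by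
      intro k _
      calc S f V r' (prof k) ≤ alpha f V (prof k) := S_le_alpha hn hmech hEF V r' (prof k)
        _ = S f V r (prof k) := (S_eq_alpha hn hmech hEF hAd (prof k)).symm
    have := Finset.sum_le_sum hterm
    linarith
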